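/- arXiv:1211.3803 — 4 statements merged into one kernel-verified Lean document; each statement's English description precedes it below -/
import Mathlib

section
/- Let J = diag(λ₁,…,λₙ) be a traceless diagonal complex n×n matrix, and for k = 1,…,n−1 define J_k = J^k − (tr(J^k)/n)·I. With the bilinear form ⟨X,Y⟩ = 2n·tr(XY), the determinant of the (n−1)×(n−1) Gram matrix G with entries G_{ij} = ⟨J_i, J_j⟩ equals 2^{n−1} · n^{n−2} · D², where D = ∏_{i<j}(λ_i − λ_j) is the Vandermonde determinant of λ₁,…,λₙ. -/
open Matrix Finset

/-- Gram determinant of the powers J_k = J^k - (tr J^k / n) I with respect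
to ⟨X,Y⟩ = 2n tr(XY) equals 2^(n-1) n^(n-2) D², D the Vandermonde determinant. -/
theorem stmt_0 (n : ℕ) (hn : 0 < n) (lam : Fin n → ℂ) (hsum : ∑ i, lam i = 0) :
    Matrix.det (Matrix.of (fun i j : Fin (n - 1) =>
      (2 * (n : ℂ)) * Matrix.trace
        (((Matrix.diagonal lam) ^ ((i : ℕ) + 1) -
            (Matrix.trace ((Matrix.diagonal lam) ^ ((i : ℕ) + 1)) / (n : ℂ)) •
              (1 : Matrix (Fin n) (Fin n) ℂ)) *
         ((Matrix.diagonal lam) ^ ((j : ℕ) + 1) -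
            (Matrix.trace ((Matrix.diagonal lam) ^ ((j : ℕ) + 1)) / (n : ℂ)) •
              (1 : Matrix (Fin n) (Fin n) ℂ)))))
    = 2 ^ (n - 1) * (n : ℂ) ^ (n - 2) *
        (∏ i : Fin n, ∏ j ∈ Finset.Ioi i, (lam i - lam j)) ^ 2 := by
  clear hsum
  obtain ⟨m, rfl⟩ : ∃ m, n = m + 1 := ⟨n - 1, (Nat.succ_pred_eq_of_pos hn).symm⟩
  clear hn
  have hnC : ((m + 1 : ℕ) : ℂ) ≠ 0 := Nat.cast_ne_zero.mpr m.succ_ne_zero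
  set P : ℕ → ℂ := fun k => ∑ a, lam a ^ k with hP
  set dd : Fin (m + 1) → ℂ := fun k => if k = 0 then 0 else P (k : ℕ) / ((m + 1 : ℕ) : ℂ)
    with hdd
  set f : ℕ → Fin (m + 1) → ℂ := fun k a => lam a ^ k - P k / ((m + 1 : ℕ) : ℂ) with hf
  -- the diagonal form of J_k
  have hdiag : ∀ k : ℕ, ((Matrix.diagonal lam) ^ k -
      (Matrix.trace ((Matrix.diagonal lam) ^ k) / ((m + 1 : ℕ) : ℂ)) •
        (1 : Matrix (Fin (m + 1)) (Fin (m + 1)) ℂ)) = Matrix.diagonal (f k) := by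
    intro k
    rw [Matrix.diagonal_pow, Matrix.trace_diagonal, Matrix.smul_one_eq_diagonal,
      ← Matrix.diagonal_sub]
    rfl
  set M : Matrix (Fin (m + 1 - 1)) (Fin (m + 1)) ℂ :=
    Matrix.of (fun i a => f ((i : ℕ) + 1) a) with hM
  set N : Matrix (Fin (m + 1)) (Fin (m + 1)) ℂ :=
    Matrix.of (fun k a => lam a ^ (k : ℕ) - dd k) with hN
  have hMN : ∀ (i : Fin (m + 1 - 1)) a, M i a = N i.succ a := by
    intro i a
    simp only [hM, hN, hf, hdd, Matrix.of_apply, Fin.val_succ]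
    rw [if_neg (Fin.succ_ne_zero i)]
  -- row sums of N vanish except the first row
  have hrow : ∀ k : Fin (m + 1), k ≠ 0 → ∑ a, N k a = 0 := by
    intro k hk
    simp only [hN, hdd, Matrix.of_apply, if_neg hk]
    rw [Finset.sum_sub_distrib, Finset.sum_const, Finset.card_univ, Fintype.card_fin,
      nsmul_eq_mul, mul_div_cancel₀ _ hnC]
    exact sub_self _
  have hN0 : ∀ a, N 0 a = 1 := by
    intro a
    simp [hN, hdd]
  -- the Gram matrix equals (2n) • (M * Mᵀ)
  have hG : (Matrix.of (fun i j : Fin (m + 1 - 1) =>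
      (2 * ((m + 1 : ℕ) : ℂ)) * Matrix.trace
        (((Matrix.diagonal lam) ^ ((i : ℕ) + 1) -
            (Matrix.trace ((Matrix.diagonal lam) ^ ((i : ℕ) + 1)) / ((m + 1 : ℕ) : ℂ)) •
              (1 : Matrix (Fin (m + 1)) (Fin (m + 1)) ℂ)) *
         ((Matrix.diagonal lam) ^ ((j : ℕ) + 1) -
            (Matrix.trace ((Matrix.diagonal lam) ^ ((j : ℕ) + 1)) / ((m + 1 : ℕ) : ℂ)) •
              (1 : Matrix (Fin (m + 1)) (Fin (m + 1)) ℂ)))))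
      = (2 * ((m + 1 : ℕ) : ℂ)) • (M * Mᵀ) := by
    ext i j
    simp only [Matrix.of_apply, hdiag, Matrix.diagonal_mul_diagonal, Matrix.trace_diagonal,
      Matrix.smul_apply, Matrix.mul_apply, Matrix.transpose_apply, smul_eq_mul, hM,
      Pi.mul_apply]
  -- C : unitriangular matrix with C * V = N, where V = (vandermonde lam)ᵀ
  set C : Matrix (Fin (m + 1)) (Fin (m + 1)) ℂ :=
    Matrix.of (fun k l => if l = k then 1 else if l = 0 then -(dd k) else 0) with hC
  have hCV : C * (Matrix.vandermonde lam)ᵀ = N := by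
    ext k a
    rw [Matrix.mul_apply]
    have : ∀ l : Fin (m + 1), C k l * (Matrix.vandermonde lam)ᵀ l a =
        (if l = k then lam a ^ (k : ℕ) else 0) +
          (if l = 0 then -(dd k) * lam a ^ (0 : ℕ) else 0) := by
      intro l
      rcases eq_or_ne l k with rfl | hlk
      · rcases eq_or_ne l 0 with rfl | hl0
        · simp [hC, hdd, Matrix.vandermonde_apply]
        · simp [hC, Matrix.vandermonde_apply, if_neg hl0]
      · rcases eq_or_ne l 0 with rfl | hl0
        · simp [hC, Matrix.vandermonde_apply, if_neg hlk]
        · simp [hC, if_neg hlk, if_neg hl0]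
    rw [Finset.sum_congr rfl fun l _ => this l, Finset.sum_add_distrib,
      Finset.sum_ite_eq' univ k, Finset.sum_ite_eq' univ (0 : Fin (m + 1))]
    simp only [Finset.mem_univ, if_true, pow_zero, mul_one, hN, Matrix.of_apply]
    ring
  have hdetC : C.det = 1 := by
    rw [Matrix.det_of_lowerTriangular C]
    · simp [hC]
    · intro i j hij
      have h1 : j ≠ i := by
        intro h; subst h; exact lt_irrefl _ hij
      have h2 : j ≠ 0 := by
        intro h; subst h
        exact (Fin.not_lt_zero i) hij
      simp [hC, if_neg h1, if_neg h2]
  have hdetN : N.det = (Matrix.vandermonde lam).det := by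
    rw [← hCV, Matrix.det_mul, hdetC, one_mul, Matrix.det_transpose]
  -- det (N * Nᵀ) = (m+1) * det (M * Mᵀ)
  have hsub : (N * Nᵀ).submatrix Fin.succ Fin.succ = M * Mᵀ := by
    ext i j
    simp only [Matrix.submatrix_apply, Matrix.mul_apply, Matrix.transpose_apply, hMN]
  have hNNT : (N * Nᵀ).det = ((m + 1 : ℕ) : ℂ) * (M * Mᵀ).det := by
    rw [Matrix.det_succ_row_zero]
    rw [Fintype.sum_eq_single (0 : Fin (m + 1)) ?h]
    · have h00 : (N * Nᵀ) 0 0 = ((m + 1 : ℕ) : ℂ) := by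
        simp [Matrix.mul_apply, hN0]
      rw [h00, Fin.succAbove_zero, hsub]
      simp
    · intro j hj
      obtain ⟨j', rfl⟩ := Fin.eq_succ_of_ne_zero hj
      have : (N * Nᵀ) 0 j'.succ = 0 := by
        simp only [Matrix.mul_apply, Matrix.transpose_apply]
        calc ∑ a, N 0 a * N j'.succ a = ∑ a, N j'.succ a := by
              simp [hN0]
          _ = 0 := hrow _ (Fin.succ_ne_zero j')
      rw [this]
      ring
  have hdetNN : (N * Nᵀ).det = ((Matrix.vandermonde lam).det) ^ 2 := by
    rw [Matrix.det_mul, Matrix.det_transpose, hdetN, sq]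
  have hkey : ((m + 1 : ℕ) : ℂ) * (M * Mᵀ).det =
      (∏ i : Fin (m + 1), ∏ j ∈ Finset.Ioi i, (lam i - lam j)) ^ 2 := by
    rw [← hNNT, hdetNN, Matrix.det_vandermonde]
    rw [← Finset.prod_pow, ← Finset.prod_pow]
    refine Finset.prod_congr rfl fun i _ => ?_
    rw [← Finset.prod_pow, ← Finset.prod_pow]
    exact Finset.prod_congr rfl fun j _ => by ring
  -- assemble
  rw [hG, Matrix.det_smul]
  have hcard : Fintype.card (Fin (m + 1 - 1)) = m := by simp
  rw [hcard]
  have h2 : m + 1 - 2 = m - 1 := by omega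
  have e1 : (2 : ℂ) ^ (m + 1 - 1) = 2 ^ m := by norm_num
  have e2 : ((m + 1 : ℕ) : ℂ) ^ (m + 1 - 2) = ((m + 1 : ℕ) : ℂ) ^ (m - 1) := by rw [h2]
  rw [e1, e2]
  apply mul_left_cancel₀ hnC
  have hpow : ((m + 1 : ℕ) : ℂ) * ((m + 1 : ℕ) : ℂ) ^ (m - 1) = ((m + 1 : ℕ) : ℂ) ^ m := by
    rcases m with _ | k
    · norm_num
    · have : k + 1 - 1 = k := by omega
      rw [this, ← pow_succ']
  calc ((m + 1 : ℕ) : ℂ) * ((2 * ((m + 1 : ℕ) : ℂ)) ^ m * (M * Mᵀ).det)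
      = (2 * ((m + 1 : ℕ) : ℂ)) ^ m * (((m + 1 : ℕ) : ℂ) * (M * Mᵀ).det) := by ring
    _ = (2 * ((m + 1 : ℕ) : ℂ)) ^ m *
        (∏ i : Fin (m + 1), ∏ j ∈ Finset.Ioi i, (lam i - lam j)) ^ 2 := by rw [hkey]
    _ = 2 ^ m * ((m + 1 : ℕ) : ℂ) ^ m *
        (∏ i : Fin (m + 1), ∏ j ∈ Finset.Ioi i, (lam i - lam j)) ^ 2 := by rw [mul_pow]
    _ = 2 ^ m * (((m + 1 : ℕ) : ℂ) * ((m + 1 : ℕ) : ℂ) ^ (m - 1)) *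
        (∏ i : Fin (m + 1), ∏ j ∈ Finset.Ioi i, (lam i - lam j)) ^ 2 := by rw [hpow]
    _ = ((m + 1 : ℕ) : ℂ) * (2 ^ m * ((m + 1 : ℕ) : ℂ) ^ (m - 1) *
        (∏ i : Fin (m + 1), ∏ j ∈ Finset.Ioi i, (lam i - lam j)) ^ 2) := by ring
end

section
/- Let S : ℝ → sl(n,ℂ) be smooth with S(x) = ψ(x)^{-1} J ψ(x) for smooth invertible ψ and fixed traceless diagonal J, and set S_k = S^k − (tr(J^k)/n)·I for k = 1,…,n−1. Then for all 1 ≤ k, l ≤ n−1, ⟨S_k(x), ∂_x S_l(x)⟩ = 0, i.e. the derivatives S_{l;x} are orthogonal (with respect to the Killing form) to the Cartan subalgebra ker(ad_{S(x)}). -/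
open Matrix Finset

section aux
variable {n : ℕ} (A : ℝ → Matrix (Fin n) (Fin n) ℂ)

noncomputable def mderiv (x : ℝ) : Matrix (Fin n) (Fin n) ℂ :=
  Matrix.of fun i j => deriv (fun y => A y i j) x

lemma diff_mul_entry (B : ℝ → Matrix (Fin n) (Fin n) ℂ)
    (hA : ∀ i j, Differentiable ℝ (fun x => A x i j))
    (hB : ∀ i j, Differentiable ℝ (fun x => B x i j)) (i j : Fin n) :
    Differentiable ℝ (fun x => (A x * B x) i j) := by
  simp only [Matrix.mul_apply]
  exact Differentiable.fun_sum fun t _ => (hA i t).mul (hB t j)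

lemma deriv_mul_entry (B : ℝ → Matrix (Fin n) (Fin n) ℂ)
    (hA : ∀ i j, Differentiable ℝ (fun x => A x i j))
    (hB : ∀ i j, Differentiable ℝ (fun x => B x i j)) (x : ℝ) (i j : Fin n) :
    deriv (fun y => (A y * B y) i j) x =
      (mderiv A x * B x + A x * mderiv B x) i j := by
  simp only [Matrix.mul_apply, Matrix.add_apply, mderiv, Matrix.of_apply]
  rw [deriv_fun_sum (fun t _ => ((hA i t).fun_mul (hB t j)).differentiableAt)]
  rw [← Finset.sum_add_distrib]
  refine Finset.sum_congr rfl fun t _ => ?_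
  rw [deriv_fun_mul ((hA i t).differentiableAt) ((hB t j).differentiableAt)]

variable (hA : ∀ i j, Differentiable ℝ (fun x => A x i j))
include hA

lemma diff_pow_entry (m : ℕ) (i j : Fin n) :
    Differentiable ℝ (fun x => (A x ^ m) i j) := by
  induction m generalizing i j with
  | zero => simp only [pow_zero]; exact differentiable_const _
  | succ m ih =>
    simp only [pow_succ]
    exact diff_mul_entry _ _ (fun i j => ih i j) hA i j

lemma mderiv_pow_succ (m : ℕ) (x : ℝ) :
    mderiv (fun y => A y ^ (m+1)) x =
      mderiv (fun y => A y ^ m) x * A x + A x ^ m * mderiv A x := by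
  ext i j
  show deriv (fun y => (A y ^ (m+1)) i j) x = _
  simp only [pow_succ]
  exact deriv_mul_entry _ _ (fun i j => diff_pow_entry A hA m i j) hA x i j

lemma trace_pow_mul_mderiv_pow (m k : ℕ) (x : ℝ) :
    Matrix.trace (A x ^ k * mderiv (fun y => A y ^ (m+1)) x) =
      (m+1 : ℂ) * Matrix.trace (A x ^ (k+m) * mderiv A x) := by
  induction m generalizing k with
  | zero =>
    have h1 : mderiv (fun y => A y ^ 1) x = mderiv A x := by
      ext i j; simp [mderiv, pow_one]
    rw [h1]; norm_num
  | succ m ih =>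
    rw [mderiv_pow_succ A hA (m+1) x, mul_add, trace_add, ← mul_assoc,
      Matrix.trace_mul_comm (A x ^ k * mderiv (fun y => A y ^ (m+1)) x) (A x),
      ← mul_assoc, ← pow_succ', ih (k+1), ← mul_assoc, ← pow_add]
    have : k + 1 + m = k + (m + 1) := by ring
    rw [this]
    push_cast; ring

lemma deriv_trace_pow (m : ℕ) (x : ℝ) :
    deriv (fun y => Matrix.trace (A y ^ m)) x =
      Matrix.trace (mderiv (fun y => A y ^ m) x) := by
  simp only [Matrix.trace, Matrix.diag, mderiv, Matrix.of_apply]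
  rw [deriv_fun_sum (fun i _ => (diff_pow_entry A hA m i i).differentiableAt)]

end aux

/-- For S(x) = ψ(x)⁻¹ J ψ(x) with J traceless diagonal and
S_k = S^k - (tr J^k / n) I, one has ⟨S_k(x), ∂ₓ S_l(x)⟩ = 0 for 1 ≤ k, l ≤ n-1,
where ⟨X,Y⟩ = 2n tr(XY) is the Killing form. -/
theorem stmt_3 (n : ℕ) (hn : 0 < n) (lam : Fin n → ℂ) (hsum : ∑ i, lam i = 0)
    (ψ : ℝ → Matrix (Fin n) (Fin n) ℂ) (hψ : ∀ x, IsUnit (ψ x))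
    (S : ℝ → Matrix (Fin n) (Fin n) ℂ)
    (hS : ∀ x, S x = (ψ x)⁻¹ * Matrix.diagonal lam * ψ x)
    (hdiff : ∀ i j : Fin n, Differentiable ℝ (fun x => S x i j)) :
    ∀ k l : ℕ, 1 ≤ k → k ≤ n - 1 → 1 ≤ l → l ≤ n - 1 → ∀ x : ℝ,
      (2 * (n : ℂ)) * Matrix.trace
        ((S x ^ k - (Matrix.trace ((Matrix.diagonal lam) ^ k) / (n : ℂ)) •
            (1 : Matrix (Fin n) (Fin n) ℂ)) *
         Matrix.of (fun i j : Fin n => deriv (fun y =>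
            (S y ^ l - (Matrix.trace ((Matrix.diagonal lam) ^ l) / (n : ℂ)) •
              (1 : Matrix (Fin n) (Fin n) ℂ)) i j) x)) = 0 := by
  intro k l hk _ hl _ x
  set J := Matrix.diagonal lam with hJ
  -- ψ x * (ψ x)⁻¹ = 1
  have hu : ∀ y, ψ y * (ψ y)⁻¹ = 1 := fun y =>
    Matrix.mul_nonsing_inv _ ((Matrix.isUnit_iff_isUnit_det _).mp (hψ y))
  -- conjugated powers
  have hpow : ∀ y m, S y ^ (m+1) = (ψ y)⁻¹ * J ^ (m+1) * ψ y := by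
    intro y m
    induction m with
    | zero => simpa using hS y
    | succ m ih =>
      rw [pow_succ, ih, hS y, pow_succ]
      calc (ψ y)⁻¹ * J ^ (m+1) * ψ y * ((ψ y)⁻¹ * J * ψ y)
          = (ψ y)⁻¹ * J ^ (m+1) * (ψ y * (ψ y)⁻¹) * J * ψ y := by
            simp only [mul_assoc]
        _ = (ψ y)⁻¹ * (J ^ (m+1) * J) * ψ y := by rw [hu y]; simp only [mul_one, mul_assoc]
  -- trace of powers is constant
  have hconst : ∀ m y, Matrix.trace (S y ^ (m+1)) = Matrix.trace (J ^ (m+1)) := by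
    intro m y
    rw [hpow y m, Matrix.trace_mul_cycle, hu y, one_mul]
  -- key : trace (S^m * S') = 0 for all m
  have key : ∀ m, Matrix.trace (S x ^ m * mderiv S x) = 0 := by
    intro m
    have h0 : (fun y => Matrix.trace (S y ^ (m+1))) = fun _ => Matrix.trace (J^(m+1)) :=
      funext fun y => hconst m y
    have h1 := deriv_trace_pow S hdiff (m+1) x
    rw [h0, deriv_const] at h1
    have h2 := trace_pow_mul_mderiv_pow S hdiff m 0 x
    rw [pow_zero, one_mul, zero_add] at h2
    have h3 : (m+1 : ℂ) * Matrix.trace (S x ^ m * mderiv S x) = 0 := by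
      rw [← h2, ← h1]
    have hm1 : (m+1 : ℂ) ≠ 0 := by exact_mod_cast Nat.succ_ne_zero m
    exact (mul_eq_zero.mp h3).resolve_left hm1
  -- the `of` matrix is the entrywise derivative of S^l
  have hofl : Matrix.of (fun i j : Fin n => deriv (fun y =>
        (S y ^ l - (Matrix.trace (J ^ l) / (n : ℂ)) •
          (1 : Matrix (Fin n) (Fin n) ℂ)) i j) x) = mderiv (fun y => S y ^ l) x := by
    ext i j
    simp only [Matrix.of_apply, mderiv, Matrix.sub_apply, Matrix.smul_apply]
    exact deriv_sub_const _
  rw [hofl]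
  obtain ⟨l', rfl⟩ : ∃ l', l = l' + 1 := ⟨l - 1, (Nat.succ_pred_eq_of_pos hl).symm⟩
  rw [sub_mul, Matrix.smul_mul, Matrix.one_mul, Matrix.trace_sub, Matrix.trace_smul,
    trace_pow_mul_mderiv_pow S hdiff l' k x]
  have h4 : Matrix.trace (mderiv (fun y => S y ^ (l'+1)) x) = 0 := by
    have h2 := trace_pow_mul_mderiv_pow S hdiff l' 0 x
    rw [pow_zero, Matrix.one_mul, zero_add, key l', mul_zero] at h2
    exact h2
  rw [h4, key (k + l'), smul_zero, mul_zero, sub_zero, mul_zero]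
end

section
/- Let S ∈ sl(3,ℂ) be conjugate to J = diag(λ₁,λ₂,λ₃) with λ₁+λ₂+λ₃ = 0 and pairwise distinct differences λ_i − λ_j. Set C₂ = λ₁²+λ₂²+λ₃² and D = (λ₁−λ₂)(λ₂−λ₃)(λ₁−λ₃). Then on the image of ad_S one has ad_S^{−1} = l(ad_S) where l(λ) = (λ/D²)(λ² − (3/2)C₂)², and l(ad_S) vanishes on ker(ad_S). -/
open Matrix

/-- For S ∈ sl(3,ℂ) conjugate to J = diag(λ₁,λ₂,λ₃), Σλᵢ = 0, with the
differences λᵢ - λⱼ pairwise distinct, and C₂ = Σλᵢ², D = (λ₁-λ₂)(λ₂-λ₃)(λ₁-λ₃):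
on im(ad_S) the inverse of ad_S is l(ad_S) with l(λ) = (λ/D²)(λ² - (3/2)C₂)², and
l(ad_S) vanishes on ker(ad_S). -/
theorem stmt_10 (lam : Fin 3 → ℂ) (hsum : ∑ i, lam i = 0)
    (hdist : ∀ i j k l : Fin 3, i ≠ j → k ≠ l → (i, j) ≠ (k, l) →
      lam i - lam j ≠ lam k - lam l)
    (S : Matrix (Fin 3) (Fin 3) ℂ)
    (g : Matrix (Fin 3) (Fin 3) ℂ) (hg : IsUnit g)
    (hS : S = g * Matrix.diagonal lam * g⁻¹)
    (adS : Matrix (Fin 3) (Fin 3) ℂ → Matrix (Fin 3) (Fin 3) ℂ)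
    (hadS : ∀ X, adS X = S * X - X * S)
    (C₂ D : ℂ)
    (hC₂ : C₂ = lam 0 ^ 2 + lam 1 ^ 2 + lam 2 ^ 2)
    (hD : D = (lam 0 - lam 1) * (lam 1 - lam 2) * (lam 0 - lam 2))
    (lad : Matrix (Fin 3) (Fin 3) ℂ → Matrix (Fin 3) (Fin 3) ℂ)
    (hlad : ∀ Z, lad Z = (D ^ 2)⁻¹ •
      adS ((adS (adS (adS (adS Z) - (3 / 2 : ℂ) • C₂ • Z))
            - (3 / 2 : ℂ) • C₂ • (adS (adS Z) - (3 / 2 : ℂ) • C₂ • Z)))) :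
    (∀ X : Matrix (Fin 3) (Fin 3) ℂ, adS (lad (adS X)) = adS X) ∧
    (∀ Z : Matrix (Fin 3) (Fin 3) ℂ, adS Z = 0 → lad Z = 0) := by
  have hdet : IsUnit g.det := (Matrix.isUnit_iff_isUnit_det g).mp hg
  have hgi : g * g⁻¹ = 1 := Matrix.mul_nonsing_inv g hdet
  have hig : g⁻¹ * g = 1 := Matrix.nonsing_inv_mul g hdet
  have h1 : ∀ M : Matrix (Fin 3) (Fin 3) ℂ, g⁻¹ * (g * M) = M := by
    intro M; rw [← Matrix.mul_assoc, hig, Matrix.one_mul]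
  have h2g : ∀ M : Matrix (Fin 3) (Fin 3) ℂ, g * (g⁻¹ * M) = M := by
    intro M; rw [← Matrix.mul_assoc, hgi, Matrix.one_mul]
  set J : Matrix (Fin 3) (Fin 3) ℂ := Matrix.diagonal lam with hJ
  set Φ : Matrix (Fin 3) (Fin 3) ℂ → Matrix (Fin 3) (Fin 3) ℂ :=
    fun M => g⁻¹ * M * g with hΦ
  set T : Matrix (Fin 3) (Fin 3) ℂ → Matrix (Fin 3) (Fin 3) ℂ :=
    fun M => J * M - M * J with hT
  have hΦinj : ∀ M N, Φ M = Φ N → M = N := by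
    intro M N h
    have := congrArg (fun P => g * P * g⁻¹) h
    simpa only [hΦ, Matrix.mul_assoc, h1, h2g, hgi, Matrix.mul_one] using this
  have hΦadS : ∀ X, Φ (adS X) = T (Φ X) := by
    intro X
    simp only [hΦ, hT, hadS, hS, Matrix.mul_sub, Matrix.sub_mul, Matrix.mul_assoc, h1, h2g,
      hig, hgi, Matrix.mul_one]
  have hΦsmul : ∀ (a : ℂ) M, Φ (a • M) = a • Φ M := by
    intro a M; simp only [hΦ, Matrix.mul_smul, Matrix.smul_mul]
  have hΦsub : ∀ M N, Φ (M - N) = Φ M - Φ N := by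
    intro M N; simp only [hΦ, Matrix.mul_sub, Matrix.sub_mul]
  have hΦlad : ∀ Z, Φ (lad Z) = (D ^ 2)⁻¹ •
      T ((T (T (T (T (Φ Z)) - (3 / 2 : ℂ) • C₂ • (Φ Z)))
            - (3 / 2 : ℂ) • C₂ • (T (T (Φ Z)) - (3 / 2 : ℂ) • C₂ • (Φ Z)))) := by
    intro Z
    rw [hlad]
    simp only [hΦsmul, hΦsub, hΦadS]
  -- entry of T
  have hTe : ∀ (M : Matrix (Fin 3) (Fin 3) ℂ) i j, (T M) i j = (lam i - lam j) * M i j := by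
    intro M i j
    simp only [hT, hJ, Matrix.sub_apply, Matrix.diagonal_mul, Matrix.mul_diagonal]
    ring
  -- lam 2 in terms of the others
  have h2 : lam 2 = -lam 0 - lam 1 := by
    have := hsum
    rw [Fin.sum_univ_three] at this
    linear_combination this
  -- nonzero differences
  have hmne : ∀ i j : Fin 3, i ≠ j → lam i - lam j ≠ 0 := by
    intro i j hij h
    have hji : lam j - lam i = 0 := by linear_combination -h
    exact hdist i j j i hij hij.symm
      (by simp [Prod.ext_iff]; intro h'; exact absurd h' hij) (by rw [h, hji])
  have hDne : D ≠ 0 := by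
    rw [hD]
    exact mul_ne_zero (mul_ne_zero (hmne 0 1 (by decide)) (hmne 1 2 (by decide)))
      (hmne 0 2 (by decide))
  -- key scalar identity
  have key : ∀ i j : Fin 3, i ≠ j →
      (lam i - lam j) ^ 2 * ((lam i - lam j) ^ 2 - (3 / 2 : ℂ) * C₂) ^ 2 = D ^ 2 := by
    intro i j hij
    subst hC₂ hD
    fin_cases i <;> fin_cases j <;> beta_reduce <;>
      simp only [Fin.mk_zero, Fin.mk_one, show (⟨2, by omega⟩ : Fin 3) = 2 from rfl] <;>
      first
        | exact absurd rfl hij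
        | (rw [h2]; ring)
  constructor
  · intro X
    apply hΦinj
    rw [hΦadS, hΦlad, hΦadS]
    set Y := Φ X with hY
    ext i j
    simp only [hTe, Matrix.smul_apply, Matrix.sub_apply, smul_eq_mul]
    rcases eq_or_ne i j with h | h
    · subst h; ring
    · have hk := key i j h
      have hinv : (D ^ 2)⁻¹ * D ^ 2 = 1 := inv_mul_cancel₀ (pow_ne_zero _ hDne)
      linear_combination (D ^ 2)⁻¹ * (lam i - lam j) * Y i j * hk +
        (lam i - lam j) * Y i j * hinv
  · intro Z hZ
    apply hΦinj _ 0
    have hTZ : T (Φ Z) = 0 := by rw [← hΦadS, hZ]; simp [hΦ]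
    have hzij : ∀ i j : Fin 3, i ≠ j → (Φ Z) i j = 0 := by
      intro i j hij
      have := congrFun (congrFun hTZ i) j
      rw [hTe] at this
      exact (mul_eq_zero.mp this).resolve_left (hmne i j hij) 
    rw [hΦlad]
    have : Φ (0 : Matrix (Fin 3) (Fin 3) ℂ) = 0 := by simp [hΦ]
    rw [this]
    ext i j
    simp only [hTe, Matrix.smul_apply, Matrix.sub_apply, smul_eq_mul, Matrix.zero_apply]
    rcases eq_or_ne i j with h | h
    · subst h; ring
    · rw [hzij i j h]; ring
end

section
/- Let S : ℝ → sl(n,ℂ)∩{Hermitian} be a smooth curve in the adjoint orbit of a real regular diagonal J, let S_k = S^k − (tr J^k/n)I, and let G be the constant Gram matrix G_{ij} = ⟨S_i,S_j⟩. Suppose a : ℝ → ℂ^{n−1} is smooth with A := Σ_k a_k S_k and i∂_x A ∈ h_S^⊥ pointwise (h_S^⊥ = Killing-orthogonal complement of ker ad_{S(x)}). Then a_x = 0, i.e. the coefficients a_k are constant. -/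
open Matrix Finset

private noncomputable def QQ {n : ℕ} (Sx D : Matrix (Fin n) (Fin n) ℂ) : ℕ → Matrix (Fin n) (Fin n) ℂ
  | 0 => 0
  | (m+1) => QQ Sx D m * Sx + Sx ^ m * D

private lemma entry_mul {n : ℕ} {M N : ℝ → Matrix (Fin n) (Fin n) ℂ}
    {M' N' : Matrix (Fin n) (Fin n) ℂ} {x : ℝ}
    (hM : ∀ i j, HasDerivAt (fun y => M y i j) (M' i j) x)
    (hN : ∀ i j, HasDerivAt (fun y => N y i j) (N' i j) x) (i j : Fin n) :
    HasDerivAt (fun y => (M y * N y) i j) ((M' * N x + M x * N') i j) x := by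
  simp only [Matrix.mul_apply, Matrix.add_apply]
  rw [← Finset.sum_add_distrib]
  exact HasDerivAt.fun_sum fun k _ => (hM i k).mul (hN k j)

private lemma pow_entry {n : ℕ} {S : ℝ → Matrix (Fin n) (Fin n) ℂ}
    {D : Matrix (Fin n) (Fin n) ℂ} {x : ℝ}
    (hS : ∀ i j, HasDerivAt (fun y => S y i j) (D i j) x) :
    ∀ (m : ℕ) (i j : Fin n), HasDerivAt (fun y => (S y ^ m) i j) (QQ (S x) D m i j) x := by
  intro m
  induction m with
  | zero =>
    intro i j
    simp only [pow_zero, QQ, Matrix.zero_apply]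
    exact hasDerivAt_const _ _
  | succ m ih =>
    intro i j
    have h := entry_mul (M := fun y => S y ^ m) (N := S) ih hS i j
    simp only [pow_succ, QQ]
    exact h

private lemma trace_QQ {n : ℕ} {Sx D : Matrix (Fin n) (Fin n) ℂ} :
    ∀ (m : ℕ) (Y : Matrix (Fin n) (Fin n) ℂ), Sx * Y = Y * Sx →
      Matrix.trace (QQ Sx D (m+1) * Y) = ((m : ℂ) + 1) * Matrix.trace (D * (Sx ^ m * Y))
  | 0, Y, hY => by simp [QQ]
  | (m+1), Y, hY => by
    have hc : Commute Sx Y := hY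
    have hY' : Sx * (Sx * Y) = (Sx * Y) * Sx := ((Commute.refl Sx).mul_right hc).eq
    have ih := trace_QQ (D := D) m (Sx * Y) hY'
    have hpow : Y * Sx ^ (m+1) = Sx ^ (m+1) * Y := ((hc.pow_left (m+1)).eq).symm
    calc Matrix.trace (QQ Sx D (m+1+1) * Y)
        = Matrix.trace (QQ Sx D (m+1) * (Sx * Y)) + Matrix.trace (Sx ^ (m+1) * D * Y) := by
          rw [show QQ Sx D (m+1+1) = QQ Sx D (m+1) * Sx + Sx ^ (m+1) * D from rfl,
            Matrix.add_mul, Matrix.trace_add, Matrix.mul_assoc]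
      _ = ((m : ℂ) + 1) * Matrix.trace (D * (Sx ^ (m+1) * Y)) + Matrix.trace (D * (Sx ^ (m+1) * Y)) := by
          rw [ih, show Sx ^ m * (Sx * Y) = Sx ^ (m+1) * Y by rw [← Matrix.mul_assoc, ← pow_succ],
            Matrix.mul_assoc (Sx ^ (m+1)) D Y, Matrix.trace_mul_comm (Sx ^ (m+1)) (D * Y),
            Matrix.mul_assoc D Y (Sx ^ (m+1)), hpow]
      _ = ((m + 1 : ℕ) + 1 : ℂ) * Matrix.trace (D * (Sx ^ (m+1) * Y)) := by push_cast; ring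

private lemma stmt18_conj_pow {n : ℕ} [DecidableEq (Fin n)] {g d : Matrix (Fin n) (Fin n) ℂ}
    (hg : IsUnit g) (m : ℕ) : (g * d * g⁻¹) ^ m = g * d ^ m * g⁻¹ := by
  have hdet := (Matrix.isUnit_iff_isUnit_det g).mp hg
  have h1 : g⁻¹ * g = 1 := Matrix.nonsing_inv_mul g hdet
  induction m with
  | zero => simp [Matrix.mul_nonsing_inv g hdet]
  | succ m ih =>
    rw [pow_succ, ih, pow_succ]
    simp only [Matrix.mul_assoc]
    rw [← Matrix.mul_assoc g⁻¹ g (d * g⁻¹), h1, Matrix.one_mul]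

private lemma final_alg {N : ℕ} (lamC : Fin (N+1) → ℂ) (hinjC : Function.Injective lamC)
    (d c : Fin N → ℂ)
    (hmain : ∀ m : ℕ, ∑ i, lamC i ^ m * (∑ k, d k * (lamC i ^ ((k : ℕ) + 1) - c k)) = 0) :
    ∀ k, d k = 0 := by
  have hdet : (Matrix.vandermonde lamC).det ≠ 0 :=
    Matrix.det_vandermonde_ne_zero_iff.mpr hinjC
  set μ : Fin (N+1) → ℂ := fun i => ∑ k, d k * (lamC i ^ ((k : ℕ) + 1) - c k) with hμdef
  have h1 : (Matrix.vandermonde lamC)ᵀ.mulVec μ = 0 := by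
    ext m
    simpa [Matrix.mulVec, dotProduct, Matrix.vandermonde, hμdef] using hmain (m : ℕ)
  have hμ : μ = 0 := Matrix.eq_zero_of_mulVec_eq_zero (by rwa [Matrix.det_transpose]) h1
  set C := ∑ k, d k * c k with hC
  set w : Fin (N+1) → ℂ := fun m => Fin.cases (-C) (fun k => d k) m with hw
  have h2 : (Matrix.vandermonde lamC).mulVec w = 0 := by
    ext i
    have hμi : μ i = 0 := congrFun hμ i
    simp only [hμdef, mul_sub, Finset.sum_sub_distrib, sub_eq_zero] at hμi
    have e1 : ∑ k : Fin N, lamC i ^ ((k : ℕ) + 1) * d k = C := by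
      rw [hC, ← hμi]
      exact Finset.sum_congr rfl fun k _ => mul_comm _ _
    show ∑ m, Matrix.vandermonde lamC i m * w m = 0
    rw [Fin.sum_univ_succ]
    simp only [Matrix.vandermonde_apply, hw, Fin.cases_zero, Fin.cases_succ, Fin.val_zero,
      pow_zero, one_mul, Fin.val_succ]
    rw [e1]
    ring
  have hw0 : w = 0 := Matrix.eq_zero_of_mulVec_eq_zero hdet h2
  intro k
  have := congrFun hw0 (Fin.succ k)
  simpa [hw] using this

/-- Let S(x) be a smooth Hermitian curve in the adjoint orbit of a real
regular traceless diagonal J, S_k = S^k - (tr J^k/n) I, and a : ℝ → ℂ^{n-1} smooth with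
A = Σ a_k S_k. If i∂ₓA is pointwise Killing-orthogonal to ker(ad_{S(x)}), then all the
coefficients a_k are constant. -/
theorem stmt_18 (n : ℕ) (hn : 0 < n)
    (lam : Fin n → ℝ) (hinj : Function.Injective lam) (hsum : ∑ i, lam i = 0)
    (S : ℝ → Matrix (Fin n) (Fin n) ℂ)
    (g : ℝ → Matrix (Fin n) (Fin n) ℂ) (hg : ∀ x, IsUnit (g x))
    (hS : ∀ x, S x = g x * Matrix.diagonal (fun i => (lam i : ℂ)) * (g x)⁻¹)
    (hHerm : ∀ x, (S x)ᴴ = S x)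
    (hSdiff : ∀ i j : Fin n, Differentiable ℝ (fun x => S x i j))
    (a : ℝ → Fin (n - 1) → ℂ)
    (hadiff : ∀ k : Fin (n - 1), Differentiable ℝ (fun x => a x k))
    (A : ℝ → Matrix (Fin n) (Fin n) ℂ)
    (hA : ∀ x, A x = ∑ k : Fin (n - 1), a x k •
      (S x ^ ((k : ℕ) + 1) -
        (Matrix.trace ((Matrix.diagonal (fun i => (lam i : ℂ))) ^ ((k : ℕ) + 1)) /
          (n : ℂ)) • (1 : Matrix (Fin n) (Fin n) ℂ)))
    (hperp : ∀ (x : ℝ) (Y : Matrix (Fin n) (Fin n) ℂ), S x * Y - Y * S x = 0 →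
      (2 * (n : ℂ)) * Matrix.trace
        ((Matrix.of fun i j : Fin n => Complex.I * deriv (fun y => A y i j) x) * Y)
        = 0) :
    ∀ (x : ℝ) (k : Fin (n - 1)), deriv (fun y => a y k) x = 0 := by
  intro x k₀
  obtain ⟨N, rfl⟩ : ∃ N, n = N + 1 := ⟨n - 1, (Nat.succ_pred_eq_of_pos hn).symm⟩
  -- basic trace facts
  have hdet : ∀ y, IsUnit (g y).det := fun y => (Matrix.isUnit_iff_isUnit_det _).mp (hg y)
  have htr : ∀ (y : ℝ) (m : ℕ), Matrix.trace (S y ^ m) = ∑ i, (lam i : ℂ) ^ m := by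
    intro y m
    rw [hS y, stmt18_conj_pow (hg y) m, Matrix.trace_mul_cycle,
      Matrix.nonsing_inv_mul _ (hdet y), Matrix.one_mul,
      Matrix.diagonal_pow, Matrix.trace_diagonal]
    rfl
  -- the entrywise derivative of S
  obtain ⟨D, hD⟩ : ∃ D, ∀ i j, HasDerivAt (fun y => S y i j) (D i j) x :=
    ⟨Matrix.of fun i j => deriv (fun y => S y i j) x, fun i j => (hSdiff i j x).hasDerivAt⟩
  have hQ := pow_entry hD
  -- trace of QQ vanishes (trace of powers is constant)
  have htrQ : ∀ m : ℕ, Matrix.trace (QQ (S x) D (m+1)) = 0 := by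
    intro m
    have h1 : HasDerivAt (fun y => Matrix.trace (S y ^ (m+1)))
        (Matrix.trace (QQ (S x) D (m+1))) x := by
      simp only [Matrix.trace, Matrix.diag]
      exact HasDerivAt.fun_sum fun i _ => hQ (m+1) i i
    have h2 : HasDerivAt (fun y => Matrix.trace (S y ^ (m+1))) 0 x := by
      have e : (fun y => Matrix.trace (S y ^ (m+1))) = fun _ => ∑ i, (lam i : ℂ) ^ (m+1) :=
        funext fun y => htr y (m+1)
      rw [e]; exact hasDerivAt_const _ _
    exact h1.unique h2
  -- trace (D * S^m) = 0
  have hDS : ∀ m : ℕ, Matrix.trace (D * S x ^ m) = 0 := by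
    intro m
    have h := trace_QQ (Sx := S x) (D := D) m 1 (by rw [Matrix.mul_one, Matrix.one_mul])
    rw [Matrix.mul_one, Matrix.mul_one, htrQ m] at h
    have hne : ((m : ℂ) + 1) ≠ 0 := by
      intro hcon
      exact Nat.succ_ne_zero m (by exact_mod_cast hcon)
    exact ((mul_eq_zero.mp h.symm).resolve_left hne)
  -- trace (QQ (r+1) * S^m) = 0
  have hQS : ∀ r m : ℕ, Matrix.trace (QQ (S x) D (r+1) * S x ^ m) = 0 := by
    intro r m
    rw [trace_QQ r (S x ^ m) ((Commute.refl (S x)).pow_right m).eq, ← pow_add, hDS (r+m),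
      mul_zero]
  -- orthogonality from hperp applied to Y = S^m
  have hDA : ∀ m : ℕ,
      Matrix.trace ((Matrix.of fun i j => deriv (fun y => A y i j) x) * S x ^ m) = 0 := by
    intro m
    have hco : S x * S x ^ m - S x ^ m * S x = 0 :=
      sub_eq_zero_of_eq ((Commute.refl (S x)).pow_right m).eq
    have h := hperp x (S x ^ m) hco
    have e : (Matrix.of fun i j : Fin (N+1) => Complex.I * deriv (fun y => A y i j) x)
        = Complex.I • (Matrix.of fun i j => deriv (fun y => A y i j) x) := by
      ext i j; simp
    rw [e, Matrix.smul_mul, Matrix.trace_smul, smul_eq_mul] at h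
    have h2 : (2 * ((N+1 : ℕ) : ℂ)) ≠ 0 :=
      mul_ne_zero two_ne_zero (Nat.cast_ne_zero.mpr (Nat.succ_ne_zero N))
    exact (mul_eq_zero.mp ((mul_eq_zero.mp h).resolve_left h2)).resolve_left Complex.I_ne_zero
  -- compute the entrywise derivative of A
  have hAd : ∀ i j, HasDerivAt (fun y => A y i j)
      ((∑ k : Fin (N+1-1), deriv (fun y => a y k) x •
          (S x ^ ((k : ℕ) + 1) -
            (Matrix.trace ((Matrix.diagonal (fun i => (lam i : ℂ))) ^ ((k : ℕ) + 1)) /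
              ((N+1 : ℕ) : ℂ)) • (1 : Matrix (Fin (N+1)) (Fin (N+1)) ℂ)) +
        ∑ k : Fin (N+1-1), a x k • QQ (S x) D ((k : ℕ) + 1)) i j) x := by
    intro i j
    have e : (fun y => A y i j) = fun y => ∑ k : Fin (N+1-1), a y k *
        ((S y ^ ((k : ℕ) + 1)) i j -
          ((Matrix.trace ((Matrix.diagonal (fun i => (lam i : ℂ))) ^ ((k : ℕ) + 1)) /
            ((N+1 : ℕ) : ℂ)) • (1 : Matrix (Fin (N+1)) (Fin (N+1)) ℂ)) i j) := by
      funext y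
      rw [hA y]
      simp [Matrix.sum_apply, Matrix.sub_apply, Matrix.smul_apply, smul_eq_mul]
    rw [e]
    have h := HasDerivAt.fun_sum (u := Finset.univ) fun (k : Fin (N+1-1)) _ =>
      ((hadiff k x).hasDerivAt.fun_mul ((hQ ((k : ℕ) + 1) i j).sub_const
        (((Matrix.trace ((Matrix.diagonal (fun i => (lam i : ℂ))) ^ ((k : ℕ) + 1)) /
            ((N+1 : ℕ) : ℂ)) • (1 : Matrix (Fin (N+1)) (Fin (N+1)) ℂ)) i j)))
    convert h using 1
    · rfl
    simp only [Matrix.add_apply, Matrix.sum_apply, Matrix.smul_apply, Matrix.sub_apply,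
      smul_eq_mul, ← Finset.sum_add_distrib]
  -- the derivative matrix of A
  have hDAeq : (Matrix.of fun i j => deriv (fun y => A y i j) x) =
      (∑ k : Fin (N+1-1), deriv (fun y => a y k) x •
          (S x ^ ((k : ℕ) + 1) -
            (Matrix.trace ((Matrix.diagonal (fun i => (lam i : ℂ))) ^ ((k : ℕ) + 1)) /
              ((N+1 : ℕ) : ℂ)) • (1 : Matrix (Fin (N+1)) (Fin (N+1)) ℂ)) +
        ∑ k : Fin (N+1-1), a x k • QQ (S x) D ((k : ℕ) + 1)) := by
    ext i j
    simp only [Matrix.of_apply]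
    exact (hAd i j).deriv
  -- main scalar identity
  have hmain : ∀ m : ℕ, ∑ k : Fin (N+1-1), deriv (fun y => a y k) x *
      ((∑ i, (lam i : ℂ) ^ ((k : ℕ) + 1 + m)) -
        (Matrix.trace ((Matrix.diagonal (fun i => (lam i : ℂ))) ^ ((k : ℕ) + 1)) /
          ((N+1 : ℕ) : ℂ)) * ∑ i, (lam i : ℂ) ^ m) = 0 := by
    intro m
    have h := hDA m
    rw [hDAeq, Matrix.add_mul, Matrix.trace_add, Finset.sum_mul, Finset.sum_mul,
      Matrix.trace_sum, Matrix.trace_sum] at h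
    simp only [Matrix.smul_mul, Matrix.trace_smul, smul_eq_mul] at h
    rw [show (∑ k : Fin (N+1-1), a x k *
        Matrix.trace (QQ (S x) D ((k : ℕ) + 1) * S x ^ m)) = 0 from
      Finset.sum_eq_zero fun k _ => by rw [hQS (k : ℕ) m, mul_zero], add_zero] at h
    calc ∑ k : Fin (N+1-1), deriv (fun y => a y k) x *
          ((∑ i, (lam i : ℂ) ^ ((k : ℕ) + 1 + m)) -
            (Matrix.trace ((Matrix.diagonal (fun i => (lam i : ℂ))) ^ ((k : ℕ) + 1)) /
              ((N+1 : ℕ) : ℂ)) * ∑ i, (lam i : ℂ) ^ m)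
        = ∑ k : Fin (N+1-1), deriv (fun y => a y k) x *
            Matrix.trace ((S x ^ ((k : ℕ) + 1) -
              (Matrix.trace ((Matrix.diagonal (fun i => (lam i : ℂ))) ^ ((k : ℕ) + 1)) /
                ((N+1 : ℕ) : ℂ)) • (1 : Matrix (Fin (N+1)) (Fin (N+1)) ℂ)) * S x ^ m) := by
          refine Finset.sum_congr rfl fun k _ => ?_
          rw [Matrix.sub_mul, Matrix.trace_sub, Matrix.smul_mul, Matrix.trace_smul,
            Matrix.one_mul, ← pow_add, htr x, htr x, smul_eq_mul]
      _ = 0 := h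
  -- reshape by swapping the sums
  have swap : ∀ (f cc : Fin (N+1-1) → ℂ) (m : ℕ),
      ∑ k : Fin (N+1-1), f k * ((∑ i, (lam i : ℂ) ^ ((k : ℕ) + 1 + m)) -
          cc k * ∑ i, (lam i : ℂ) ^ m)
        = ∑ i, (lam i : ℂ) ^ m *
            (∑ k : Fin (N+1-1), f k * ((lam i : ℂ) ^ ((k : ℕ) + 1) - cc k)) := by
    intro f cc m
    simp only [mul_sub, Finset.mul_sum, Finset.sum_sub_distrib]
    congr 1
    · rw [Finset.sum_comm]
      exact Finset.sum_congr rfl fun i _ => Finset.sum_congr rfl fun k _ => by ring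
    · rw [Finset.sum_comm]
      exact Finset.sum_congr rfl fun i _ => Finset.sum_congr rfl fun k _ => by ring
  have hmain2 : ∀ m : ℕ, ∑ i, (lam i : ℂ) ^ m *
      (∑ k : Fin (N+1-1), deriv (fun y => a y k) x *
        ((lam i : ℂ) ^ ((k : ℕ) + 1) -
          Matrix.trace ((Matrix.diagonal (fun i => (lam i : ℂ))) ^ ((k : ℕ) + 1)) /
            ((N+1 : ℕ) : ℂ))) = 0 := by
    intro m
    rw [← swap (fun k => deriv (fun y => a y k) x)
      (fun k => Matrix.trace ((Matrix.diagonal (fun i => (lam i : ℂ))) ^ ((k : ℕ) + 1)) /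
        ((N+1 : ℕ) : ℂ)) m]
    exact hmain m
  have hinjC : Function.Injective (fun i => ((lam i : ℂ))) := fun i j h => by
    have h' : (lam i : ℂ) = (lam j : ℂ) := h
    exact hinj (by exact_mod_cast h')
  exact final_alg (fun i => (lam i : ℂ)) hinjC
    (fun k => deriv (fun y => a y k) x)
    (fun k => Matrix.trace ((Matrix.diagonal (fun i => (lam i : ℂ))) ^ ((k : ℕ) + 1)) /
      ((N+1 : ℕ) : ℂ)) hmain2 k₀
end
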